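/- arXiv:0710.2685 — 5 statements merged into one kernel-verified Lean document; each statement's English description precedes it below -/
import Mathlib

section
/- If a Three Hat configuration s has all entries distinct, then the maximum entry of σ(s) is strictly less than the maximum entry of s. -/
/-- A Three Hat configuration: a triple of positive integers in which
one entry equals the sum of the other two. -/
def ThreeHat.IsConfig (s : ℕ × ℕ × ℕ) : Prop :=
  0 < s.1 ∧ 0 < s.2.1 ∧ 0 < s.2.2 ∧
    (s.1 = s.2.1 + s.2.2 ∨ s.2.1 = s.1 + s.2.2 ∨ s.2.2 = s.1 + s.2.1)

/-- A base configuration: two of the entries are equal. -/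
def ThreeHat.IsBase (s : ℕ × ℕ × ℕ) : Prop :=
  s.1 = s.2.1 ∨ s.1 = s.2.2 ∨ s.2.1 = s.2.2

/-- The reduction map σ: fixes base configurations, otherwise replaces the
largest entry by the difference of the other two. -/
def ThreeHat.step (s : ℕ × ℕ × ℕ) : ℕ × ℕ × ℕ :=
  let a := s.1; let b := s.2.1; let c := s.2.2
  if a = b ∨ a = c ∨ b = c then s
  else if b < a ∧ c < a then (max b c - min b c, b, c)
  else if a < b ∧ c < b then (a, max a c - min a c, c)
  else (a, b, max a b - min a b)

/-- The maximum entry of a configuration. -/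
def ThreeHat.max3 (s : ℕ × ℕ × ℕ) : ℕ := max s.1 (max s.2.1 s.2.2)

theorem three_hat_step_max_decreases (s : ℕ × ℕ × ℕ) (h : ThreeHat.IsConfig s)
    (hdist : s.1 ≠ s.2.1 ∧ s.1 ≠ s.2.2 ∧ s.2.1 ≠ s.2.2) :
    ThreeHat.max3 (ThreeHat.step s) < ThreeHat.max3 s := by
  obtain ⟨a, b, c⟩ := s
  obtain ⟨ha, hb, hc, hsum⟩ := h
  obtain ⟨h1, h2, h3⟩ := hdist
  simp only [ThreeHat.step, ThreeHat.max3] at *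
  rw [if_neg (by tauto)]
  rcases hsum with hs | hs | hs <;>
  · subst hs
    split_ifs <;> simp_all <;> omega
end

section
/- For every Three Hat configuration s there exists n ≥ 0 such that σ^n(s) is a base configuration (has two equal entries). -/
lemma ThreeHat.key (s : ℕ × ℕ × ℕ) (h : ThreeHat.IsConfig s) (hb : ¬ ThreeHat.IsBase s) :
    ThreeHat.IsConfig (ThreeHat.step s) ∧ ThreeHat.max3 (ThreeHat.step s) < ThreeHat.max3 s := by
  obtain ⟨a, b, c⟩ := s
  simp only [ThreeHat.IsConfig, ThreeHat.IsBase, ThreeHat.step, ThreeHat.max3] at *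
  split_ifs <;> simp_all <;> omega

lemma ThreeHat.aux : ∀ m : ℕ, ∀ s : ℕ × ℕ × ℕ, ThreeHat.max3 s ≤ m →
    ThreeHat.IsConfig s → ∃ n : ℕ, ThreeHat.IsBase (ThreeHat.step^[n] s) := by
  intro m
  induction m with
  | zero =>
    intro s hm h
    refine ⟨0, ?_⟩
    simp only [Function.iterate_zero, id_eq]
    simp only [ThreeHat.max3] at hm
    simp only [ThreeHat.IsConfig] at h
    simp only [ThreeHat.IsBase]
    omega
  | succ m ih =>
    intro s hm h
    by_cases hb : ThreeHat.IsBase s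
    · exact ⟨0, hb⟩
    · obtain ⟨h1, h2⟩ := ThreeHat.key s h hb
      obtain ⟨n, hn⟩ := ih (ThreeHat.step s) (by omega) h1
      exact ⟨n + 1, by rw [Function.iterate_succ_apply]; exact hn⟩

theorem three_hat_reaches_base (s : ℕ × ℕ × ℕ) (h : ThreeHat.IsConfig s) :
    ∃ n : ℕ, ThreeHat.IsBase (ThreeHat.step^[n] s) :=
  ThreeHat.aux (ThreeHat.max3 s) s le_rfl h
end

section
/- For a Three Hat configuration [a,b,c] with a pairwise coprime, the iteration of σ starting from [a,b,c] terminates in one of the base configurations [1,1,2], [1,2,1], [2,1,1]. -/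
private lemma cop_sub {b c : ℕ} (h : Nat.Coprime b c) (hle : b ≤ c) :
    Nat.Coprime (c - b) b ∧ Nat.Coprime (c - b) c := by
  have h1 : Nat.Coprime (c - b) b := (Nat.coprime_sub_self_left hle).2 h.symm
  refine ⟨h1, ?_⟩
  have h2 := (Nat.coprime_add_self_right (m := c - b) (n := b)).2 h1
  rwa [show b + (c - b) = c by omega] at h2

private lemma step_lemma (a b c : ℕ) (h : ThreeHat.IsConfig (a, b, c))
    (hab : Nat.Coprime a b) (hac : Nat.Coprime a c) (hbc : Nat.Coprime b c)
    (hnb : ¬ ThreeHat.IsBase (a, b, c)) :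
    ThreeHat.IsConfig (ThreeHat.step (a, b, c)) ∧
    Nat.Coprime (ThreeHat.step (a, b, c)).1 (ThreeHat.step (a, b, c)).2.1 ∧
    Nat.Coprime (ThreeHat.step (a, b, c)).1 (ThreeHat.step (a, b, c)).2.2 ∧
    Nat.Coprime (ThreeHat.step (a, b, c)).2.1 (ThreeHat.step (a, b, c)).2.2 ∧
    ThreeHat.max3 (ThreeHat.step (a, b, c)) < ThreeHat.max3 (a, b, c) := by
  simp only [ThreeHat.IsBase, not_or] at hnb
  obtain ⟨nab, nac, nbc⟩ := hnb
  obtain ⟨ha, hb, hc, hsum⟩ := h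
  dsimp only at ha hb hc hsum nab nac nbc
  unfold ThreeHat.step
  dsimp only
  rw [if_neg (by tauto)]
  rcases hsum with hs | hs | hs
  · -- a = b + c, so a is the largest
    rw [if_pos (by constructor <;> omega)]
    rcases Nat.lt_or_ge b c with hlt | hge
    · have hmm : max b c - min b c = c - b := by omega
      rw [hmm]
      obtain ⟨c1, c2⟩ := cop_sub hbc (le_of_lt hlt)
      refine ⟨⟨?_, ?_, ?_, ?_⟩, c1, c2, hbc, ?_⟩ <;>
        (try simp only [ThreeHat.max3]) <;> omega
    · have hlt : c < b := by omega
      have hmm : max b c - min b c = b - c := by omega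
      rw [hmm]
      obtain ⟨c1, c2⟩ := cop_sub hbc.symm (le_of_lt hlt)
      refine ⟨⟨?_, ?_, ?_, ?_⟩, c2.symm.symm, c1, hbc, ?_⟩ <;>
        (try simp only [ThreeHat.max3]) <;> omega
  · -- b = a + c
    rw [if_neg (by omega), if_pos (by constructor <;> omega)]
    rcases Nat.lt_or_ge a c with hlt | hge
    · have hmm : max a c - min a c = c - a := by omega
      rw [hmm]
      obtain ⟨c1, c2⟩ := cop_sub hac (le_of_lt hlt)
      refine ⟨⟨?_, ?_, ?_, ?_⟩, c1.symm, hac, c2, ?_⟩ <;>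
        (try simp only [ThreeHat.max3]) <;> omega
    · have hlt : c < a := by omega
      have hmm : max a c - min a c = a - c := by omega
      rw [hmm]
      obtain ⟨c1, c2⟩ := cop_sub hac.symm (le_of_lt hlt)
      refine ⟨⟨?_, ?_, ?_, ?_⟩, c2.symm, hac, c1, ?_⟩ <;>
        (try simp only [ThreeHat.max3]) <;> omega
  · -- c = a + b
    rw [if_neg (by omega), if_neg (by omega)]
    rcases Nat.lt_or_ge a b with hlt | hge
    · have hmm : max a b - min a b = b - a := by omega
      rw [hmm]
      obtain ⟨c1, c2⟩ := cop_sub hab (le_of_lt hlt)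
      refine ⟨⟨?_, ?_, ?_, ?_⟩, hab, c1.symm, c2.symm, ?_⟩ <;>
        (try simp only [ThreeHat.max3]) <;> omega
    · have hlt : b < a := by omega
      have hmm : max a b - min a b = a - b := by omega
      rw [hmm]
      obtain ⟨c1, c2⟩ := cop_sub hab.symm (le_of_lt hlt)
      refine ⟨⟨?_, ?_, ?_, ?_⟩, hab, c2.symm, c1.symm, ?_⟩ <;>
        (try simp only [ThreeHat.max3]) <;> omega

private lemma base_lemma (a b c : ℕ) (h : ThreeHat.IsConfig (a, b, c))
    (hab : Nat.Coprime a b) (hac : Nat.Coprime a c) (hbc : Nat.Coprime b c)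
    (hB : ThreeHat.IsBase (a, b, c)) :
    (a, b, c) = ((1 : ℕ), (1 : ℕ), (2 : ℕ)) ∨ (a, b, c) = ((1 : ℕ), (2 : ℕ), (1 : ℕ)) ∨
      (a, b, c) = ((2 : ℕ), (1 : ℕ), (1 : ℕ)) := by
  obtain ⟨ha, hb, hc, hsum⟩ := h
  dsimp only at ha hb hc hsum
  rcases hB with he | he | he <;> dsimp only at he
  · have h1 : b = 1 := by
      have := hab; rw [he] at this; simpa [Nat.Coprime, Nat.gcd_self] using this
    left; simp only [Prod.mk.injEq]; omega
  · have h1 : c = 1 := by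
      have := hac; rw [he] at this; simpa [Nat.Coprime, Nat.gcd_self] using this
    right; left; simp only [Prod.mk.injEq]; omega
  · have h1 : c = 1 := by
      have := hbc; rw [he] at this; simpa [Nat.Coprime, Nat.gcd_self] using this
    right; right; simp only [Prod.mk.injEq]; omega

private lemma main_lemma (N : ℕ) : ∀ s : ℕ × ℕ × ℕ, ThreeHat.max3 s ≤ N →
    ThreeHat.IsConfig s → Nat.Coprime s.1 s.2.1 → Nat.Coprime s.1 s.2.2 →
    Nat.Coprime s.2.1 s.2.2 →
    ∃ n : ℕ, ThreeHat.step^[n] s = (1, 1, 2) ∨ ThreeHat.step^[n] s = (1, 2, 1) ∨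
      ThreeHat.step^[n] s = (2, 1, 1) := by
  induction N with
  | zero =>
    rintro ⟨a, b, c⟩ hN ⟨ha, _⟩
    simp only [ThreeHat.max3] at hN
    omega
  | succ N ih =>
    rintro ⟨a, b, c⟩ hN h hab hac hbc
    by_cases hB : ThreeHat.IsBase (a, b, c)
    · exact ⟨0, by simpa using base_lemma a b c h hab hac hbc hB⟩
    · obtain ⟨h', c1, c2, c3, hlt⟩ := step_lemma a b c h hab hac hbc hB
      have hle : ThreeHat.max3 (ThreeHat.step (a, b, c)) ≤ N := by omega
      obtain ⟨n, hn⟩ := ih _ hle h' c1 c2 c3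
      exact ⟨n + 1, by rwa [Function.iterate_succ_apply]⟩

theorem three_hat_coprime_terminal (s : ℕ × ℕ × ℕ) (h : ThreeHat.IsConfig s)
    (hab : Nat.Coprime s.1 s.2.1) (hac : Nat.Coprime s.1 s.2.2)
    (hbc : Nat.Coprime s.2.1 s.2.2) :
    ∃ n : ℕ, ThreeHat.step^[n] s = (1, 1, 2) ∨ ThreeHat.step^[n] s = (1, 2, 1) ∨
      ThreeHat.step^[n] s = (2, 1, 1) := by
  exact main_lemma (ThreeHat.max3 s) s le_rfl h hab hac hbc
end

section
/- There is a unique triple (b, c) of positive integers such that the Three Hat configuration [50, b, c] (with 50 equal to the sum of b and c or one of b, c equal to the sum of the other two, as appropriate) terminates with Player A declaring 50 on turn 4 under the Chain Reduction Strategy, namely (b,c) = (20,30). Equivalently, [50,20,30] is the unique configuration with a = 50 and r([a,b,c]) = 4 ending with Player A. -/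
/-- The index (0 for A, 1 for B, 2 for C) of the player holding the cue,
i.e. whose number is the sum of the other two. -/
def ThreeHat.cue (s : ℕ × ℕ × ℕ) : ℕ :=
  if s.1 = s.2.1 + s.2.2 then 0 else if s.2.1 = s.1 + s.2.2 then 1 else 2

/-- Turn count of the Chain Reduction Strategy, computed with fuel. -/
def ThreeHat.rAux : ℕ → ℕ × ℕ × ℕ → ℕ
  | 0, s => ThreeHat.cue s + 1
  | n + 1, s =>
    if s.1 = s.2.1 ∨ s.1 = s.2.2 ∨ s.2.1 = s.2.2 then ThreeHat.cue s + 1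
    else ThreeHat.rAux n (ThreeHat.step s) +
      ((ThreeHat.cue s + 2 - ThreeHat.cue (ThreeHat.step s)) % 3 + 1)

/-- The turn on which the game ends under the Chain Reduction Strategy. -/
def ThreeHat.r (s : ℕ × ℕ × ℕ) : ℕ := ThreeHat.rAux (ThreeHat.max3 s) s

theorem three_hat_first_puzzle_unique (b c : ℕ) :
    (0 < b ∧ 0 < c ∧ 50 = b + c ∧ ThreeHat.r (50, b, c) = 4) ↔ (b = 20 ∧ c = 30) := by
  constructor
  · rintro ⟨hb, hc, hsum, hr⟩
    have hb50 : b < 50 := by omega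
    have hc' : c = 50 - b := by omega
    subst hc'
    interval_cases b <;> revert hr <;> decide
  · rintro ⟨rfl, rfl⟩
    refine ⟨by norm_num, by norm_num, by norm_num, by decide⟩
end

section
/- For every positive integer M ≥ 2 there exists a Three Hat configuration s with pairwise coprime entries whose chain length N(s) (least n with σ^n(s) base) is at least M; for example, configurations built from consecutive Fibonacci numbers [F(k+1), F(k), F(k-1)] have N growing linearly in k. -/
namespace ThreeHatProof

open Nat

instance : DecidablePred ThreeHat.IsBase := fun _ =>
  inferInstanceAs (Decidable (_ ∨ _ ∨ _))

/-- The Fibonacci configuration with offset index. -/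
def T (m : ℕ) : ℕ × ℕ × ℕ := (fib (m + 4), fib (m + 3), fib (m + 2))

lemma fib_lt' {a b : ℕ} (ha : 2 ≤ a) (h : a < b) : fib a < fib b :=
  (Nat.fib_lt_fib ha).2 h

lemma step_first {a b c : ℕ} (hcb : c < b) (hba : b < a) :
    ThreeHat.step (a, b, c) = (b - c, b, c) := by
  unfold ThreeHat.step; dsimp only
  rw [if_neg (by omega), if_pos ⟨by omega, by omega⟩,
    max_eq_left hcb.le, min_eq_right hcb.le]

lemma step_second {a b c : ℕ} (hac : a < c) (hcb : c < b) :
    ThreeHat.step (a, b, c) = (a, c - a, c) := by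
  unfold ThreeHat.step; dsimp only
  rw [if_neg (by omega), if_neg (by omega), if_pos ⟨by omega, by omega⟩,
    max_eq_right hac.le, min_eq_left hac.le]

lemma step_third {a b c : ℕ} (hba : b < a) (hac : a < c) :
    ThreeHat.step (a, b, c) = (a, b, a - b) := by
  unfold ThreeHat.step; dsimp only
  rw [if_neg (by omega), if_neg (by omega), if_neg (by omega),
    max_eq_left hba.le, min_eq_right hba.le]

lemma notBase {a b c : ℕ} (h1 : a ≠ b) (h2 : a ≠ c) (h3 : b ≠ c) :
    ¬ ThreeHat.IsBase (a, b, c) := by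
  simp [ThreeHat.IsBase, h1, h2, h3]

lemma sub_fib (m : ℕ) : fib (m + 2) - fib (m + 1) = fib m := by
  rw [fib_add_two]; omega

lemma step_one (m : ℕ) :
    ThreeHat.step (T (m + 3)) = (fib (m + 4), fib (m + 6), fib (m + 5)) := by
  rw [show T (m + 3) = (fib (m + 7), fib (m + 6), fib (m + 5)) by simp [T],
    step_first (fib_lt' (by omega) (by omega)) (fib_lt' (by omega) (by omega)),
    show m + 6 = (m + 4) + 2 by ring, sub_fib]

lemma step_two (m : ℕ) :
    ThreeHat.step^[2] (T (m + 3)) = (fib (m + 4), fib (m + 3), fib (m + 5)) := by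
  rw [show (2:ℕ) = 1 + 1 from rfl, Function.iterate_succ_apply',
    Function.iterate_one, step_one,
    step_second (fib_lt' (by omega) (by omega)) (fib_lt' (by omega) (by omega)),
    show m + 5 = (m + 3) + 2 by ring, sub_fib]

lemma step3 (m : ℕ) : ThreeHat.step^[3] (T (m + 3)) = T m := by
  rw [show (3:ℕ) = 2 + 1 from rfl, Function.iterate_succ_apply', step_two,
    step_third (fib_lt' (by omega) (by omega)) (fib_lt' (by omega) (by omega)),
    show m + 4 = (m + 2) + 2 by ring, sub_fib]
  rfl

set_option maxHeartbeats 1000000 in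
lemma key : ∀ m : ℕ, (∀ n < m + 1, ¬ ThreeHat.IsBase (ThreeHat.step^[n] (T m))) ∧
    ThreeHat.IsBase (ThreeHat.step^[m + 1] (T m))
  | 0 => ⟨by intro n hn; interval_cases n <;> decide, by decide⟩
  | 1 => ⟨by intro n hn; interval_cases n <;> decide, by decide⟩
  | 2 => ⟨by intro n hn; interval_cases n <;> decide, by decide⟩
  | (m + 3) => by
    obtain ⟨ih1, ih2⟩ := key m
    have hiter : ∀ n, ThreeHat.step^[n + 3] (T (m + 3)) = ThreeHat.step^[n] (T m) := by
      intro n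
      rw [Function.iterate_add_apply, step3]
    constructor
    · intro n hn
      match n with
      | 0 =>
        exact notBase (Nat.ne_of_gt (fib_lt' (by omega) (by omega)))
          (Nat.ne_of_gt (fib_lt' (by omega) (by omega)))
          (Nat.ne_of_gt (fib_lt' (by omega) (by omega)))
      | 1 =>
        rw [Function.iterate_one, step_one]
        exact notBase (Nat.ne_of_lt (fib_lt' (by omega) (by omega)))
          (Nat.ne_of_lt (fib_lt' (by omega) (by omega)))
          (Nat.ne_of_gt (fib_lt' (by omega) (by omega)))
      | 2 =>
        rw [step_two]
        exact notBase (Nat.ne_of_gt (fib_lt' (by omega) (by omega)))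
          (Nat.ne_of_lt (fib_lt' (by omega) (by omega)))
          (Nat.ne_of_lt (fib_lt' (by omega) (by omega)))
      | (n + 3) =>
        rw [hiter]
        exact ih1 n (by omega)
    · rw [show m + 3 + 1 = (m + 1) + 3 by ring, hiter]
      exact ih2

lemma key' (m : ℕ) :
    IsLeast {n : ℕ | ThreeHat.IsBase (ThreeHat.step^[n] (T m))} (m + 1) := by
  obtain ⟨h1, h2⟩ := key m
  refine ⟨h2, fun n hn => ?_⟩
  by_contra hlt
  exact h1 n (by omega) hn

lemma T_config (m : ℕ) : ThreeHat.IsConfig (T m) := by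
  refine ⟨fib_pos.2 (by omega), fib_pos.2 (by omega), fib_pos.2 (by omega), Or.inl ?_⟩
  show fib (m + 4) = fib (m + 3) + fib (m + 2)
  rw [show m + 4 = (m + 2) + 2 by ring, fib_add_two]
  ring

lemma T_coprime (m : ℕ) : Nat.Coprime (T m).1 (T m).2.1 ∧
    Nat.Coprime (T m).1 (T m).2.2 ∧ Nat.Coprime (T m).2.1 (T m).2.2 := by
  have h1 : Nat.Coprime (fib (m + 3)) (fib (m + 4)) := fib_coprime_fib_succ _
  have h2 : Nat.Coprime (fib (m + 2)) (fib (m + 3)) := fib_coprime_fib_succ _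
  refine ⟨h1.symm, ?_, h2.symm⟩
  show Nat.Coprime (fib (m + 4)) (fib (m + 2))
  rw [show m + 4 = (m + 2) + 2 by ring, fib_add_two, add_comm, Nat.coprime_add_self_left]
  exact h2.symm

end ThreeHatProof


theorem three_hat_unbounded_chains :
    (∀ M : ℕ, 2 ≤ M → ∃ s : ℕ × ℕ × ℕ, ThreeHat.IsConfig s ∧
      Nat.Coprime s.1 s.2.1 ∧ Nat.Coprime s.1 s.2.2 ∧ Nat.Coprime s.2.1 s.2.2 ∧
      ∃ N : ℕ, IsLeast {n : ℕ | ThreeHat.IsBase (ThreeHat.step^[n] s)} N ∧ M ≤ N) ∧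
    ∀ k : ℕ, 3 ≤ k →
      ThreeHat.IsConfig (Nat.fib (k + 1), Nat.fib k, Nat.fib (k - 1)) ∧
      ∃ N : ℕ, IsLeast {n : ℕ | ThreeHat.IsBase
          (ThreeHat.step^[n] (Nat.fib (k + 1), Nat.fib k, Nat.fib (k - 1)))} N ∧
        k - 2 ≤ N := by
  constructor
  · intro M hM
    refine ⟨ThreeHatProof.T (M - 1), ThreeHatProof.T_config _,
      (ThreeHatProof.T_coprime _).1, (ThreeHatProof.T_coprime _).2.1,
      (ThreeHatProof.T_coprime _).2.2, M - 1 + 1, ThreeHatProof.key' _, by omega⟩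
  · intro k hk
    obtain ⟨m, rfl⟩ : ∃ m, k = m + 3 := ⟨k - 3, by omega⟩
    have hT : (Nat.fib (m + 3 + 1), Nat.fib (m + 3), Nat.fib (m + 3 - 1))
        = ThreeHatProof.T m := by
      simp [ThreeHatProof.T]
    rw [hT]
    exact ⟨ThreeHatProof.T_config m, m + 1, ThreeHatProof.key' m, by omega⟩
end
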